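/- Let n ≥ 1 and 1 ≤ d ≤ n be integers, let x ∈ ℝ^n, r > 0, let A ⊆ U(x,r) be a convex set, and let P be a d-dimensional affine plane of ℝ^n passing through x. Suppose 0 < ε < 1/2, 0 < δ < 1/2, and A ⊆ (P + B̄(0, εr)) ∩ B̄(x, (1−δ)r). Then there exists a Lipschitz map φ: ℝ^n → ℝ^n such that φ(y) = y for every y ∈ ℝ^n ∖ U(x,r), φ(z) = P_♮(z) for every z ∈ A, φ(U(x,r)) ⊆ U(x,r), and φ is (3 + ε/δ)-Lipschitz. -/

import Mathlib

open MeasureTheory Metric Set Filter Topology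
open scoped ENNReal NNReal

noncomputable section

/-- Euclidean space `ℝ^n`. -/
abbrev Euc (n : ℕ) := EuclideanSpace ℝ (Fin n)

/-- A deformation on `ℝⁿ` in the open set `U`: a Lipschitz map `φ : ℝⁿ → ℝⁿ` homotopic to the
identity such that the closure of `W_φ = {x | φ x ≠ x}` is compact and contained in `U`. -/
def IsDeformation (n : ℕ) (U : Set (Euc n)) (φ : Euc n → Euc n) : Prop :=
  (∃ K : ℝ≥0, LipschitzWith K φ) ∧
  (∃ hc : Continuous φ, (ContinuousMap.id (Euc n)).Homotopic ⟨φ, hc⟩) ∧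
  IsCompact (closure {x | φ x ≠ x}) ∧
  closure {x | φ x ≠ x} ⊆ U

/-- Membership in the class `QM(ℝⁿ, U, M, ε)`: `H^d`-restriction to `E` is locally finite,
`E ∩ U` is relatively closed in `U`, and for every deformation `φ` on `ℝⁿ` in `U` one has
`H^d(E ∩ W_φ) ≤ M(r) · H^d(φ(E ∩ W_φ)) + ε(r)` with `r = diam (W_φ ∪ φ(W_φ))`. -/
def MemQM (n : ℕ) (d : ℕ) (U : Set (Euc n)) (M ε : ℝ → ℝ≥0∞) (E : Set (Euc n)) : Prop :=
  IsLocallyFiniteMeasure ((μH[(d : ℝ)] : Measure (Euc n)).restrict E) ∧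
  (∃ F : Set (Euc n), IsClosed F ∧ E ∩ U = F ∩ U) ∧
  ∀ φ : Euc n → Euc n, IsDeformation n U φ →
    μH[(d : ℝ)] (E ∩ {x | φ x ≠ x}) ≤
      M (diam ({x | φ x ≠ x} ∪ φ '' {x | φ x ≠ x})) *
        μH[(d : ℝ)] (φ '' (E ∩ {x | φ x ≠ x})) +
      ε (diam ({x | φ x ≠ x} ∪ φ '' {x | φ x ≠ x}))

/-- Weak convergence of Radon measures: testing against continuous compactly supported
functions. -/
def WeakConv (n : ℕ) (μs : ℕ → Measure (Euc n)) (μ : Measure (Euc n)) : Prop :=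
  ∀ f : Euc n → ℝ, Continuous f → HasCompactSupport f →
    Tendsto (fun k => ∫ x, f x ∂(μs k)) atTop (𝓝 (∫ x, f x ∂μ))

/-- The support `spt μ` of a measure: points all of whose neighborhoods have positive measure. -/
def msupport (n : ℕ) (μ : Measure (Euc n)) : Set (Euc n) :=
  {x | ∀ r : ℝ, 0 < r → 0 < μ (ball x r)}

/-- `ω_d`: the Lebesgue measure of the unit ball of `ℝ^d`. -/
def ωb (d : ℕ) : ℝ≥0∞ := volume (ball (0 : Euc d) 1)

/-- Upper `d`-density `Θ^{*d}(μ,x) = limsup_{r→0+} μ(B̄(x,r))/(ω_d r^d)`. -/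
def upperDensity (n : ℕ) (d : ℕ) (μ : Measure (Euc n)) (x : Euc n) : ℝ≥0∞ :=
  limsup (fun r : ℝ => μ (closedBall x r) / (ωb d * ENNReal.ofReal r ^ d)) (𝓝[>] (0 : ℝ))

/-- Lower `d`-density `Θ_*^d(μ,x) = liminf_{r→0+} μ(B̄(x,r))/(ω_d r^d)`. -/
def lowerDensity (n : ℕ) (d : ℕ) (μ : Measure (Euc n)) (x : Euc n) : ℝ≥0∞ :=
  liminf (fun r : ℝ => μ (closedBall x r) / (ωb d * ENNReal.ofReal r ^ d)) (𝓝[>] (0 : ℝ))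

/-- `limsup_{k→∞}` of a sequence of real-valued gauge functions, with values in `[0,∞]`. -/
def limsupFn (Ms : ℕ → ℝ → ℝ) : ℝ → ℝ≥0∞ :=
  fun r => Filter.limsup (fun k => ENNReal.ofReal (Ms k r)) atTop

/-- Right limit at `0` of a nondecreasing function `[0,∞) → [0,∞]`, i.e. `M(0+)`. -/
def rightLim0 (M : ℝ → ℝ≥0∞) : ℝ≥0∞ := ⨅ r ∈ Set.Ioi (0 : ℝ), M r

open scoped InnerProductSpace

private lemma trunc_aux {E : Type*} [NormedAddCommGroup E] [NormedSpace ℝ E]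
    {c : ℝ} (hc : 0 < c) {a b : E} (ha : ‖a‖ ≤ c) (hb : c < ‖b‖) :
    ‖a - (c / ‖b‖) • b‖ ≤ 2 * ‖a - b‖ := by
  have hbpos : (0:ℝ) < ‖b‖ := hc.trans hb
  have h1 : a - (c / ‖b‖) • b = (a - b) + (1 - c / ‖b‖) • b := by
    rw [sub_smul, one_smul]; abel
  have hfle : c / ‖b‖ ≤ 1 := (div_le_one hbpos).2 hb.le
  have h2 : ‖(1 - c / ‖b‖) • b‖ = ‖b‖ - c := by
    rw [norm_smul, Real.norm_eq_abs, abs_of_nonneg (by linarith), sub_mul, one_mul,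
      div_mul_cancel₀ _ hbpos.ne']
  have h3 : ‖b‖ - c ≤ ‖a - b‖ := by
    have := norm_sub_norm_le b a
    rw [norm_sub_rev] at this
    linarith
  calc ‖a - (c / ‖b‖) • b‖ ≤ ‖a - b‖ + ‖(1 - c / ‖b‖) • b‖ := by rw [h1]; exact norm_add_le _ _
    _ ≤ 2 * ‖a - b‖ := by rw [h2]; linarith

private lemma trunc_lip {E : Type*} [NormedAddCommGroup E] [NormedSpace ℝ E]
    {c : ℝ} (hc : 0 < c) (a b : E) :
    ‖(if ‖a‖ ≤ c then a else (c / ‖a‖) • a) - (if ‖b‖ ≤ c then b else (c / ‖b‖) • b)‖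
      ≤ 2 * ‖a - b‖ := by
  by_cases ha : ‖a‖ ≤ c
  case pos =>
    by_cases hb : ‖b‖ ≤ c
    · rw [if_pos ha, if_pos hb]; linarith [norm_nonneg (a - b)]
    · rw [if_pos ha, if_neg hb]; exact trunc_aux hc ha (lt_of_not_ge hb)
  case neg =>
    by_cases hb : ‖b‖ ≤ c
    · rw [if_neg ha, if_pos hb, norm_sub_rev, norm_sub_rev a b]
      exact trunc_aux hc hb (lt_of_not_ge ha)
    rw [if_neg ha, if_neg hb]
    push_neg at ha hb
    have hapos : (0:ℝ) < ‖a‖ := hc.trans ha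
    have hbpos : (0:ℝ) < ‖b‖ := hc.trans hb
    have key : (c / ‖a‖) • a - (c / ‖b‖) • b
        = (c / ‖a‖) • (a - b) + (c / ‖a‖ - c / ‖b‖) • b := by
      rw [smul_sub, sub_smul]; abel
    have h4 : |c / ‖a‖ - c / ‖b‖| * ‖b‖ ≤ (c / ‖a‖) * ‖a - b‖ := by
      have hd : c / ‖a‖ - c / ‖b‖ = c * (‖b‖ - ‖a‖) / (‖a‖ * ‖b‖) := by
        field_simp
      rw [hd, abs_div, abs_mul, abs_of_pos hc, abs_of_pos (mul_pos hapos hbpos)]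
      have h5 : |‖b‖ - ‖a‖| ≤ ‖a - b‖ := by
        rw [norm_sub_rev]; exact abs_norm_sub_norm_le b a
      rw [div_mul_eq_mul_div, div_le_iff₀ (mul_pos hapos hbpos)]
      calc c * |‖b‖ - ‖a‖| * ‖b‖ ≤ c * ‖a - b‖ * ‖b‖ := by
            have := mul_le_mul_of_nonneg_left h5 hc.le
            nlinarith [hbpos.le]
        _ = c / ‖a‖ * ‖a - b‖ * (‖a‖ * ‖b‖) := by field_simp
    have hfa : c / ‖a‖ ≤ 1 := (div_le_one hapos).2 ha.le
    have hfa0 : 0 ≤ c / ‖a‖ := by positivity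
    calc ‖(c / ‖a‖) • a - (c / ‖b‖) • b‖
        ≤ ‖(c / ‖a‖) • (a - b)‖ + ‖(c / ‖a‖ - c / ‖b‖) • b‖ := by
          rw [key]; exact norm_add_le _ _
      _ = (c / ‖a‖) * ‖a - b‖ + |c / ‖a‖ - c / ‖b‖| * ‖b‖ := by
          rw [norm_smul, norm_smul, Real.norm_eq_abs, Real.norm_eq_abs, abs_of_nonneg hfa0]
      _ ≤ (c / ‖a‖) * ‖a - b‖ + (c / ‖a‖) * ‖a - b‖ := by linarith
      _ ≤ 2 * ‖a - b‖ := by nlinarith [norm_nonneg (a - b)]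

private lemma clamp_lip (s t : ℝ) : |max 0 (min 1 s) - max 0 (min 1 t)| ≤ |s - t| := by
  have h1 : |max (min 1 s) 0 - max (min 1 t) 0| ≤ |min 1 s - min 1 t| :=
    abs_max_sub_max_le_abs _ _ _
  have h2 : |min 1 s - min 1 t| ≤ max |1 - 1| |s - t| := abs_min_sub_min_le_max 1 s 1 t
  have h3 : max |(1:ℝ) - 1| |s - t| = |s - t| := by simp
  rw [max_comm (0:ℝ), max_comm (0:ℝ) (min 1 t)]
  rw [h3] at h2
  exact h1.trans h2


set_option maxHeartbeats 2000000 in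
/-- Lemma 6.2 / Lemma 2.5 of [FFL:2019]: if a convex set `A ⊆ U(x,r)` lies
in the `εr`-neighborhood of a `d`-plane `P` through `x` and inside `B̄(x,(1−δ)r)`, there is a
`(3 + ε/δ)`-Lipschitz map `φ` of `ℝⁿ`, equal to the identity outside `U(x,r)`, mapping
`U(x,r)` into itself, and coinciding with the orthogonal projection `P_♮` on `A`.
Here `P = x + T` with `T` a `d`-dimensional linear subspace. -/
theorem projection_deformation
    (n d : ℕ) (hn : 1 ≤ n) (hd : 1 ≤ d) (hdn : d ≤ n)
    (x : Euc n) (r : ℝ) (hr : 0 < r)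
    (A : Set (Euc n)) (hAconv : Convex ℝ A) (hAball : A ⊆ ball x r)
    (T : Submodule ℝ (Euc n)) (hTdim : Module.finrank ℝ T = d)
    (ε δ : ℝ) (hε : 0 < ε) (hε2 : ε < 1 / 2) (hδ : 0 < δ) (hδ2 : δ < 1 / 2)
    (hA : A ⊆ {y : Euc n | infDist (y - x) (T : Set (Euc n)) ≤ ε * r} ∩
      closedBall x ((1 - δ) * r)) :
    ∃ φ : Euc n → Euc n,
      (∀ y ∉ ball x r, φ y = y) ∧
      (∀ z ∈ A, φ z = x + (T.orthogonalProjection (z - x) : Euc n)) ∧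
      φ '' ball x r ⊆ ball x r ∧
      (∀ y z : Euc n, dist (φ y) (φ z) ≤ (3 + ε / δ) * dist y z):= by
  classical
  have hc : (0:ℝ) < ε * r := mul_pos hε hr
  have hδr : (0:ℝ) < δ * r := mul_pos hδ hr
  set u : Euc n → Euc n := fun y => (y - x) - (T.orthogonalProjection (y - x) : Euc n)
    with hu_def
  set w : Euc n → Euc n :=
    fun y => if ‖u y‖ ≤ ε * r then u y else ((ε * r) / ‖u y‖) • u y with hw_def
  set a : Euc n → ℝ := fun y => max 0 (min 1 ((r - ‖y - x‖) / (δ * r))) with ha_def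
  -- basic facts about the orthogonal projection
  have hmin : ∀ v : Euc n, ∀ p ∈ T, ‖v - (T.orthogonalProjection v : Euc n)‖ ≤ ‖v - p‖ := by
    intro v p hp
    have h0 : ⟪v - (T.orthogonalProjection v : Euc n),
        ((T.orthogonalProjection v : Euc n) - p)⟫_ℝ = 0 :=
      Submodule.inner_left_of_mem_orthogonal
        (Submodule.sub_mem T (T.orthogonalProjection v).2 hp)
        (Submodule.sub_starProjection_mem_orthogonal (K := T) v)
    have h1 : v - p = (v - (T.orthogonalProjection v : Euc n))
        + ((T.orthogonalProjection v : Euc n) - p) := by abel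
    have h2 := norm_add_sq_real (v - (T.orthogonalProjection v : Euc n))
      ((T.orthogonalProjection v : Euc n) - p)
    rw [← h1, h0] at h2
    nlinarith [norm_nonneg (v - p), norm_nonneg (v - (T.orthogonalProjection v : Euc n)),
      norm_nonneg ((T.orthogonalProjection v : Euc n) - p)]
  have hu_lip : ∀ y z : Euc n, ‖u y - u z‖ ≤ ‖y - z‖ := by
    intro y z
    have hlin : u y - u z = (y - z) - (T.orthogonalProjection (y - z) : Euc n) := by
      have h1 : (y : Euc n) - z = (y - x) - (z - x) := by abel
      simp only [hu_def, h1, map_sub, Submodule.coe_sub]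
      abel
    rw [hlin]
    have := hmin (y - z) 0 T.zero_mem
    simpa using this
  have hinner : ∀ v : Euc n,
      ⟪v, v - (T.orthogonalProjection v : Euc n)⟫_ℝ
        = ‖v - (T.orthogonalProjection v : Euc n)‖ ^ 2 := by
    intro v
    have hzero : ⟪(T.orthogonalProjection v : Euc n),
        v - (T.orthogonalProjection v : Euc n)⟫_ℝ = 0 :=
      Submodule.inner_right_of_mem_orthogonal (T.orthogonalProjection v).2
        (Submodule.sub_starProjection_mem_orthogonal (K := T) v)
    have h2 : ⟪v - (T.orthogonalProjection v : Euc n),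
          v - (T.orthogonalProjection v : Euc n)⟫_ℝ
        = ⟪v, v - (T.orthogonalProjection v : Euc n)⟫_ℝ
          - ⟪(T.orthogonalProjection v : Euc n),
              v - (T.orthogonalProjection v : Euc n)⟫_ℝ :=
      inner_sub_left _ _ _
    rw [real_inner_self_eq_norm_sq] at h2
    rw [hzero, sub_zero] at h2
    linarith
  -- the contraction estimate
  have hcontract : ∀ (v : Euc n) (s : ℝ), 0 ≤ s → s ≤ 1 →
      ‖v - s • (v - (T.orthogonalProjection v : Euc n))‖ ≤ ‖v‖ := by
    intro v s hs0 hs1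
    set q : Euc n := v - (T.orthogonalProjection v : Euc n) with hq_def
    have hq : ⟪v, q⟫_ℝ = ‖q‖ ^ 2 := hinner v
    have hsq : ‖v - s • q‖ ^ 2 ≤ ‖v‖ ^ 2 := by
      rw [norm_sub_sq_real, real_inner_smul_right, hq, norm_smul, Real.norm_eq_abs,
        abs_of_nonneg hs0, mul_pow]
      nlinarith [mul_nonneg (mul_nonneg hs0 (sub_nonneg.2 hs1)) (sq_nonneg (‖q‖)),
        mul_nonneg hs0 (sq_nonneg (‖q‖))]
    nlinarith [norm_nonneg v, norm_nonneg (v - s • q)]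
  -- bounds on a and w
  have ha01 : ∀ y : Euc n, 0 ≤ a y ∧ a y ≤ 1 := by
    intro y
    constructor
    · exact le_max_left _ _
    · exact max_le (by norm_num) (min_le_left _ _)
  have hw_le : ∀ y : Euc n, ‖w y‖ ≤ ε * r := by
    intro y
    by_cases h : ‖u y‖ ≤ ε * r
    · simpa [hw_def, h] using h
    · push_neg at h
      have : (0:ℝ) < ‖u y‖ := hc.trans h
      simp only [hw_def, if_neg (not_le.2 h), norm_smul, Real.norm_eq_abs,
        abs_of_pos (div_pos hc this)]
      rw [div_mul_cancel₀ _ this.ne']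
  have hw_lip : ∀ y z : Euc n, ‖w y - w z‖ ≤ 2 * ‖y - z‖ := by
    intro y z
    calc ‖w y - w z‖ ≤ 2 * ‖u y - u z‖ := trunc_lip hc (u y) (u z)
      _ ≤ 2 * ‖y - z‖ := by linarith [hu_lip y z]
  have ha_lip : ∀ y z : Euc n, |a y - a z| ≤ ‖y - z‖ / (δ * r) := by
    intro y z
    have h12 : |a y - a z| ≤ |(r - ‖y - x‖) / (δ * r) - (r - ‖z - x‖) / (δ * r)| := by
      rw [ha_def]
      exact clamp_lip _ _
    have h3 : (r - ‖y - x‖) / (δ * r) - (r - ‖z - x‖) / (δ * r)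
        = (‖z - x‖ - ‖y - x‖) / (δ * r) := by ring
    have h4 : |‖z - x‖ - ‖y - x‖| ≤ ‖y - z‖ := by
      rw [norm_sub_rev y z]
      have := abs_norm_sub_norm_le (z - x) (y - x)
      simpa [sub_sub_sub_cancel_right] using this
    calc |a y - a z| ≤ |(‖z - x‖ - ‖y - x‖) / (δ * r)| := by rw [← h3]; exact h12
      _ = |‖z - x‖ - ‖y - x‖| / (δ * r) := by rw [abs_div, abs_of_pos hδr]
      _ ≤ ‖y - z‖ / (δ * r) := by exact div_le_div_of_nonneg_right h4 hδr.le |>.trans_eq rfl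
  refine ⟨fun y => y - a y • w y, ?_, ?_, ?_, ?_⟩
  · -- identity outside the ball
    intro y hy
    have hyx : r ≤ ‖y - x‖ := by
      rw [mem_ball, dist_eq_norm] at hy; linarith [not_lt.1 hy]
    have ha0 : a y = 0 := by
      rw [ha_def]
      simp only
      rw [max_eq_left]
      refine (min_le_right _ _).trans (div_nonpos_iff.2 (Or.inr ⟨by linarith, hδr.le⟩))
    simp [ha0]
  · -- equals the projection on A
    intro z hz
    obtain ⟨hz1, hz2⟩ := hA hz
    have hz2' : ‖z - x‖ ≤ (1 - δ) * r := by rwa [mem_closedBall, dist_eq_norm] at hz2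
    have hu_small : ‖u z‖ ≤ ε * r := by
      obtain ⟨p, hpT, hpd⟩ := (Submodule.closed_of_finiteDimensional T).exists_infDist_eq_dist
        ⟨0, T.zero_mem⟩ (z - x)
      have hle : ‖u z‖ ≤ infDist (z - x) (T : Set (Euc n)) := by
        rw [hpd, dist_eq_norm]
        exact hmin (z - x) p hpT
      exact hle.trans hz1
    have hwz : w z = u z := by rw [hw_def]; simp [hu_small]
    have haz : a z = 1 := by
      rw [ha_def]
      simp only
      have h1 : (1:ℝ) ≤ (r - ‖z - x‖) / (δ * r) := by
        rw [le_div_iff₀ hδr]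
        nlinarith
      rw [min_eq_left h1, max_eq_right (by norm_num)]
    simp only [haz, hwz, one_smul, hu_def]
    abel
  · -- maps the ball into itself
    rintro _ ⟨y, hy, rfl⟩
    rw [mem_ball, dist_eq_norm] at hy ⊢
    have key : ∃ s : ℝ, 0 ≤ s ∧ s ≤ 1 ∧ a y • w y = s • u y := by
      by_cases h : ‖u y‖ ≤ ε * r
      · exact ⟨a y, (ha01 y).1, (ha01 y).2, by rw [hw_def]; simp [h]⟩
      · push_neg at h
        have hupos : (0:ℝ) < ‖u y‖ := hc.trans h
        refine ⟨a y * (ε * r / ‖u y‖), ?_, ?_, ?_⟩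
        · have := (ha01 y).1; positivity
        · have hd1 : ε * r / ‖u y‖ ≤ 1 := (div_le_one hupos).2 h.le
          have hd0 : 0 ≤ ε * r / ‖u y‖ := by positivity
          nlinarith [(ha01 y).1, (ha01 y).2]
        · rw [hw_def]; simp only [if_neg (not_le.2 h)]; rw [smul_smul]
    obtain ⟨s, hs0, hs1, hsw⟩ := key
    have h1 : (fun y => y - a y • w y) y - x = (y - x) - s • u y := by
      simp only [hsw]; abel
    rw [h1]
    exact lt_of_le_of_lt (hcontract (y - x) s hs0 hs1) hy
  · -- Lipschitz estimate
    intro y z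
    rw [dist_eq_norm, dist_eq_norm]
    have h1 : (y - a y • w y) - (z - a z • w z)
        = (y - z) - (a y • (w y - w z) + (a y - a z) • w z) := by
      rw [smul_sub, sub_smul]; abel
    have h2 : ‖a y • (w y - w z)‖ ≤ 2 * ‖y - z‖ := by
      rw [norm_smul, Real.norm_eq_abs, abs_of_nonneg (ha01 y).1]
      calc a y * ‖w y - w z‖ ≤ 1 * (2 * ‖y - z‖) :=
            mul_le_mul (ha01 y).2 (hw_lip y z) (norm_nonneg _) (by norm_num)
        _ = 2 * ‖y - z‖ := by ring
    have h3 : ‖(a y - a z) • w z‖ ≤ (ε / δ) * ‖y - z‖ := by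
      rw [norm_smul, Real.norm_eq_abs]
      calc |a y - a z| * ‖w z‖ ≤ (‖y - z‖ / (δ * r)) * (ε * r) :=
            mul_le_mul (ha_lip y z) (hw_le z) (norm_nonneg _) (by positivity)
        _ = (ε / δ) * ‖y - z‖ := by field_simp
    calc ‖(y - a y • w y) - (z - a z • w z)‖
        ≤ ‖y - z‖ + ‖a y • (w y - w z) + (a y - a z) • w z‖ := by
          rw [h1]; exact norm_sub_le _ _
      _ ≤ ‖y - z‖ + (‖a y • (w y - w z)‖ + ‖(a y - a z) • w z‖) := by
          gcongr; exact norm_add_le _ _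
      _ ≤ ‖y - z‖ + (2 * ‖y - z‖ + (ε / δ) * ‖y - z‖) := by gcongr
      _ = (3 + ε / δ) * ‖y - z‖ := by ring
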